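/- There exists a pair of orthogonal 8-cycle decompositions of the complete bipartite graph K_{16,16}: two partitions of the edge set of K_{16,16} into cycles of length 8 such that any cycle of the first partition and any cycle of the second partition share at most one edge. -/

import Mathlib

/-- A set of edges `C` forms a cycle of length `l`: there is a graph and a closed walk
which is a cycle, has length `l`, and whose edge set is exactly `C`. -/
def IsCycleEdgeSet {V : Type*} (l : ℕ) (C : Set (Sym2 V)) : Prop :=
  ∃ (G : SimpleGraph V) (x : V) (w : G.Walk x x),
    w.IsCycle ∧ w.length = l ∧ C = {e | e ∈ w.edges}

/-- `D` is a decomposition of the edge set of `G` into cycles of length `l`: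
each member of `D` is the edge set of an `l`-cycle contained in `G`, and every
edge of `G` lies in exactly one member of `D`. -/
def IsCycleDecomposition {V : Type*} (G : SimpleGraph V) (l : ℕ)
    (D : Set (Set (Sym2 V))) : Prop :=
  (∀ C ∈ D, IsCycleEdgeSet l C ∧ C ⊆ G.edgeSet) ∧
  (∀ e ∈ G.edgeSet, ∃! C, C ∈ D ∧ e ∈ C)

/-- Two cycle decompositions are orthogonal if any member of the first and any member
of the second share at most one edge. -/
def OrthogonalDecompositions {V : Type*} (D₁ D₂ : Set (Set (Sym2 V))) : Prop :=
  ∀ C₁ ∈ D₁, ∀ C₂ ∈ D₂, (C₁ ∩ C₂).Subsingleton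

abbrev GG : SimpleGraph (Fin 32) :=
  SimpleGraph.fromRel (fun x y : Fin 32 => (x : ℕ) / 16 ≠ (y : ℕ) / 16)

instance : DecidableRel GG.Adj := fun a b =>
  inferInstanceAs (Decidable (a ≠ b ∧ _))

def mkW (a b c d e f g h : Fin 32)
    (H : GG.Adj a b ∧ GG.Adj b c ∧ GG.Adj c d ∧ GG.Adj d e ∧ GG.Adj e f ∧
      GG.Adj f g ∧ GG.Adj g h ∧ GG.Adj h a) : GG.Walk a a :=
  .cons H.1 (.cons H.2.1 (.cons H.2.2.1 (.cons H.2.2.2.1 (.cons H.2.2.2.2.1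
    (.cons H.2.2.2.2.2.1 (.cons H.2.2.2.2.2.2.1 (.cons H.2.2.2.2.2.2.2 .nil)))))))

def W1 : Fin 32 → (a : Fin 32) × GG.Walk a a := fun i => match i with
  | 0 => ⟨_, mkW 0 16 12 28 8 24 4 20 (by decide)⟩
  | 1 => ⟨_, mkW 1 17 13 29 9 25 5 21 (by decide)⟩
  | 2 => ⟨_, mkW 2 18 14 30 10 26 6 22 (by decide)⟩
  | 3 => ⟨_, mkW 3 19 15 31 11 27 7 23 (by decide)⟩
  | 4 => ⟨_, mkW 0 17 12 29 8 25 4 21 (by decide)⟩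
  | 5 => ⟨_, mkW 1 18 13 30 9 26 5 22 (by decide)⟩
  | 6 => ⟨_, mkW 2 19 14 31 10 27 6 23 (by decide)⟩
  | 7 => ⟨_, mkW 3 20 15 16 11 28 7 24 (by decide)⟩
  | 8 => ⟨_, mkW 0 18 12 30 8 26 4 22 (by decide)⟩
  | 9 => ⟨_, mkW 1 19 13 31 9 27 5 23 (by decide)⟩
  | 10 => ⟨_, mkW 2 20 14 16 10 28 6 24 (by decide)⟩
  | 11 => ⟨_, mkW 3 21 15 17 11 29 7 25 (by decide)⟩
  | 12 => ⟨_, mkW 0 19 12 31 8 27 4 23 (by decide)⟩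
  | 13 => ⟨_, mkW 1 20 13 16 9 28 5 24 (by decide)⟩
  | 14 => ⟨_, mkW 2 21 14 17 10 29 6 25 (by decide)⟩
  | 15 => ⟨_, mkW 3 22 15 18 11 30 7 26 (by decide)⟩
  | 16 => ⟨_, mkW 0 24 12 20 8 16 4 28 (by decide)⟩
  | 17 => ⟨_, mkW 1 25 13 21 9 17 5 29 (by decide)⟩
  | 18 => ⟨_, mkW 2 26 14 22 10 18 6 30 (by decide)⟩
  | 19 => ⟨_, mkW 3 27 15 23 11 19 7 31 (by decide)⟩
  | 20 => ⟨_, mkW 0 25 12 21 8 17 4 29 (by decide)⟩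
  | 21 => ⟨_, mkW 1 26 13 22 9 18 5 30 (by decide)⟩
  | 22 => ⟨_, mkW 2 27 14 23 10 19 6 31 (by decide)⟩
  | 23 => ⟨_, mkW 3 28 15 24 11 20 7 16 (by decide)⟩
  | 24 => ⟨_, mkW 0 26 12 22 8 18 4 30 (by decide)⟩
  | 25 => ⟨_, mkW 1 27 13 23 9 19 5 31 (by decide)⟩
  | 26 => ⟨_, mkW 2 28 14 24 10 20 6 16 (by decide)⟩
  | 27 => ⟨_, mkW 3 29 15 25 11 21 7 17 (by decide)⟩
  | 28 => ⟨_, mkW 0 27 12 23 8 19 4 31 (by decide)⟩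
  | 29 => ⟨_, mkW 1 28 13 24 9 20 5 16 (by decide)⟩
  | 30 => ⟨_, mkW 2 29 14 25 10 21 6 17 (by decide)⟩
  | _ => ⟨_, mkW 3 30 15 26 11 22 7 18 (by decide)⟩

def W2 : Fin 32 → (a : Fin 32) × GG.Walk a a := fun i => match i with
  | 0 => ⟨_, mkW 14 27 0 19 5 17 3 16 (by decide)⟩
  | 1 => ⟨_, mkW 4 24 10 18 1 29 15 26 (by decide)⟩
  | 2 => ⟨_, mkW 8 28 6 25 13 30 11 23 (by decide)⟩
  | 3 => ⟨_, mkW 2 22 7 21 9 20 12 31 (by decide)⟩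
  | 4 => ⟨_, mkW 14 24 0 18 5 29 3 26 (by decide)⟩
  | 5 => ⟨_, mkW 4 28 10 25 1 30 15 23 (by decide)⟩
  | 6 => ⟨_, mkW 8 22 6 21 13 20 11 31 (by decide)⟩
  | 7 => ⟨_, mkW 2 16 7 27 9 19 12 17 (by decide)⟩
  | 8 => ⟨_, mkW 14 28 0 25 5 30 3 23 (by decide)⟩
  | 9 => ⟨_, mkW 4 22 10 21 1 20 15 31 (by decide)⟩
  | 10 => ⟨_, mkW 8 16 6 27 13 19 11 17 (by decide)⟩
  | 11 => ⟨_, mkW 2 26 7 24 9 18 12 29 (by decide)⟩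
  | 12 => ⟨_, mkW 14 22 0 21 5 20 3 31 (by decide)⟩
  | 13 => ⟨_, mkW 4 16 10 27 1 19 15 17 (by decide)⟩
  | 14 => ⟨_, mkW 8 26 6 24 13 18 11 29 (by decide)⟩
  | 15 => ⟨_, mkW 2 23 7 28 9 25 12 30 (by decide)⟩
  | 16 => ⟨_, mkW 14 17 0 16 5 27 3 19 (by decide)⟩
  | 17 => ⟨_, mkW 4 29 10 26 1 24 15 18 (by decide)⟩
  | 18 => ⟨_, mkW 8 30 6 23 13 28 11 25 (by decide)⟩
  | 19 => ⟨_, mkW 2 20 7 31 9 22 12 21 (by decide)⟩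
  | 20 => ⟨_, mkW 14 29 0 26 5 24 3 18 (by decide)⟩
  | 21 => ⟨_, mkW 4 30 10 23 1 28 15 25 (by decide)⟩
  | 22 => ⟨_, mkW 8 20 6 31 13 22 11 21 (by decide)⟩
  | 23 => ⟨_, mkW 2 19 7 17 9 16 12 27 (by decide)⟩
  | 24 => ⟨_, mkW 14 30 0 23 5 28 3 25 (by decide)⟩
  | 25 => ⟨_, mkW 4 20 10 31 1 22 15 21 (by decide)⟩
  | 26 => ⟨_, mkW 8 19 6 17 13 16 11 27 (by decide)⟩
  | 27 => ⟨_, mkW 2 18 7 29 9 26 12 24 (by decide)⟩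
  | 28 => ⟨_, mkW 14 20 0 31 5 22 3 21 (by decide)⟩
  | 29 => ⟨_, mkW 4 19 10 17 1 16 15 27 (by decide)⟩
  | 30 => ⟨_, mkW 8 18 6 29 13 26 11 24 (by decide)⟩
  | _ => ⟨_, mkW 2 25 7 30 9 23 12 28 (by decide)⟩

def NL1 : Fin 32 → List ℕ := fun i => match i with
  | 0 => [16, 400, 412, 284, 280, 152, 148, 20]
  | 1 => [49, 433, 445, 317, 313, 185, 181, 53]
  | 2 => [82, 466, 478, 350, 346, 218, 214, 86]
  | 3 => [115, 499, 511, 383, 379, 251, 247, 119]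
  | 4 => [17, 401, 413, 285, 281, 153, 149, 21]
  | 5 => [50, 434, 446, 318, 314, 186, 182, 54]
  | 6 => [83, 467, 479, 351, 347, 219, 215, 87]
  | 7 => [116, 500, 496, 368, 380, 252, 248, 120]
  | 8 => [18, 402, 414, 286, 282, 154, 150, 22]
  | 9 => [51, 435, 447, 319, 315, 187, 183, 55]
  | 10 => [84, 468, 464, 336, 348, 220, 216, 88]
  | 11 => [117, 501, 497, 369, 381, 253, 249, 121]
  | 12 => [19, 403, 415, 287, 283, 155, 151, 23]
  | 13 => [52, 436, 432, 304, 316, 188, 184, 56]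
  | 14 => [85, 469, 465, 337, 349, 221, 217, 89]
  | 15 => [118, 502, 498, 370, 382, 254, 250, 122]
  | 16 => [24, 408, 404, 276, 272, 144, 156, 28]
  | 17 => [57, 441, 437, 309, 305, 177, 189, 61]
  | 18 => [90, 474, 470, 342, 338, 210, 222, 94]
  | 19 => [123, 507, 503, 375, 371, 243, 255, 127]
  | 20 => [25, 409, 405, 277, 273, 145, 157, 29]
  | 21 => [58, 442, 438, 310, 306, 178, 190, 62]
  | 22 => [91, 475, 471, 343, 339, 211, 223, 95]
  | 23 => [124, 508, 504, 376, 372, 244, 240, 112]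
  | 24 => [26, 410, 406, 278, 274, 146, 158, 30]
  | 25 => [59, 443, 439, 311, 307, 179, 191, 63]
  | 26 => [92, 476, 472, 344, 340, 212, 208, 80]
  | 27 => [125, 509, 505, 377, 373, 245, 241, 113]
  | 28 => [27, 411, 407, 279, 275, 147, 159, 31]
  | 29 => [60, 444, 440, 312, 308, 180, 176, 48]
  | 30 => [93, 477, 473, 345, 341, 213, 209, 81]
  | _ => [126, 510, 506, 378, 374, 246, 242, 114]

def NL2 : Fin 32 → List ℕ := fun i => match i with
  | 0 => [475, 27, 19, 179, 177, 113, 112, 464]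
  | 1 => [152, 344, 338, 50, 61, 509, 506, 154]
  | 2 => [284, 220, 217, 441, 446, 382, 375, 279]
  | 3 => [86, 246, 245, 309, 308, 404, 415, 95]
  | 4 => [472, 24, 18, 178, 189, 125, 122, 474]
  | 5 => [156, 348, 345, 57, 62, 510, 503, 151]
  | 6 => [278, 214, 213, 437, 436, 372, 383, 287]
  | 7 => [80, 240, 251, 315, 307, 403, 401, 81]
  | 8 => [476, 28, 25, 185, 190, 126, 119, 471]
  | 9 => [150, 342, 341, 53, 52, 500, 511, 159]
  | 10 => [272, 208, 219, 443, 435, 371, 369, 273]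
  | 11 => [90, 250, 248, 312, 306, 402, 413, 93]
  | 12 => [470, 22, 21, 181, 180, 116, 127, 479]
  | 13 => [144, 336, 347, 59, 51, 499, 497, 145]
  | 14 => [282, 218, 216, 440, 434, 370, 381, 285]
  | 15 => [87, 247, 252, 316, 313, 409, 414, 94]
  | 16 => [465, 17, 16, 176, 187, 123, 115, 467]
  | 17 => [157, 349, 346, 58, 56, 504, 498, 146]
  | 18 => [286, 222, 215, 439, 444, 380, 377, 281]
  | 19 => [84, 244, 255, 319, 310, 406, 405, 85]
  | 20 => [477, 29, 26, 186, 184, 120, 114, 466]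
  | 21 => [158, 350, 343, 55, 60, 508, 505, 153]
  | 22 => [276, 212, 223, 447, 438, 374, 373, 277]
  | 23 => [83, 243, 241, 305, 304, 400, 411, 91]
  | 24 => [478, 30, 23, 183, 188, 124, 121, 473]
  | 25 => [148, 340, 351, 63, 54, 502, 501, 149]
  | 26 => [275, 211, 209, 433, 432, 368, 379, 283]
  | 27 => [82, 242, 253, 317, 314, 410, 408, 88]
  | 28 => [468, 20, 31, 191, 182, 118, 117, 469]
  | 29 => [147, 339, 337, 49, 48, 496, 507, 155]
  | 30 => [274, 210, 221, 445, 442, 378, 376, 280]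
  | _ => [89, 249, 254, 318, 311, 407, 412, 92]

def enc : Sym2 (Fin 32) → ℕ :=
  Sym2.lift ⟨fun a b => min a.1 b.1 * 32 + max a.1 b.1, by
    intro a b
    simp [Nat.min_comm, Nat.max_comm]⟩

lemma enc_inj : Function.Injective enc := by
  intro e1 e2 h
  induction e1 using Sym2.ind with
  | _ a b =>
    induction e2 using Sym2.ind with
    | _ c d =>
      simp only [enc, Sym2.lift_mk] at h
      have ha := a.isLt; have hb := b.isLt
      have hc := c.isLt; have hd := d.isLt
      rw [Sym2.eq_iff]
      have : (a.1 = c.1 ∧ b.1 = d.1) ∨ (a.1 = d.1 ∧ b.1 = c.1) := by omega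
      rcases this with ⟨h1, h2⟩ | ⟨h1, h2⟩
      · exact Or.inl ⟨Fin.ext h1, Fin.ext h2⟩
      · exact Or.inr ⟨Fin.ext h1, Fin.ext h2⟩

def EL1 : Fin 32 → List (Sym2 (Fin 32)) := fun i => (W1 i).2.edges
def EL2 : Fin 32 → List (Sym2 (Fin 32)) := fun i => (W2 i).2.edges

def DD1 : Set (Set (Sym2 (Fin 32))) := Set.range (fun i => {e | e ∈ EL1 i})
def DD2 : Set (Set (Sym2 (Fin 32))) := Set.range (fun i => {e | e ∈ EL2 i})

set_option maxRecDepth 10000 in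
lemma menc1 : ∀ i : Fin 32, (EL1 i).map enc = NL1 i := by decide +kernel
set_option maxRecDepth 10000 in
lemma menc2 : ∀ i : Fin 32, (EL2 i).map enc = NL2 i := by decide +kernel

set_option maxRecDepth 10000 in
lemma key1 : ∀ i : Fin 32,
    (NL1 i).Nodup ∧ (W1 i).2.support.tail.Nodup ∧ (W1 i).2.length = 8 := by decide +kernel
set_option maxRecDepth 10000 in
lemma key2 : ∀ i : Fin 32,
    (NL2 i).Nodup ∧ (W2 i).2.support.tail.Nodup ∧ (W2 i).2.length = 8 := by decide +kernel

set_option maxRecDepth 10000 in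
lemma ncover1 : ∀ x y : Fin 32, GG.Adj x y → ∃ i : Fin 32, enc s(x, y) ∈ NL1 i := by decide +kernel
set_option maxRecDepth 10000 in
lemma ncover2 : ∀ x y : Fin 32, GG.Adj x y → ∃ i : Fin 32, enc s(x, y) ∈ NL2 i := by decide +kernel

set_option maxRecDepth 10000 in
lemma ndisj1 : ∀ i j : Fin 32, i ≠ j → ∀ x ∈ NL1 i, x ∉ NL1 j := by decide +kernel
set_option maxRecDepth 10000 in
lemma ndisj2 : ∀ i j : Fin 32, i ≠ j → ∀ x ∈ NL2 i, x ∉ NL2 j := by decide +kernel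

set_option maxRecDepth 10000 in
lemma north : ∀ i j : Fin 32,
    ((NL1 i).filter (fun x => decide (x ∈ NL2 j))).length ≤ 1 := by decide +kernel

lemma mem_iff {l : List (Sym2 (Fin 32))} {nl : List ℕ} (h : l.map enc = nl)
    (e : Sym2 (Fin 32)) : e ∈ l ↔ enc e ∈ nl := by
  subst h
  constructor
  · intro he
    exact List.mem_map_of_mem (f := enc) he
  · intro he
    obtain ⟨e', h', hq⟩ := List.mem_map.mp he
    exact (enc_inj hq) ▸ h'

lemma len_le_one {α : Type*} {l : List α} (h : l.length ≤ 1) {a b : α}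
    (ha : a ∈ l) (hb : b ∈ l) : a = b := by
  match l with
  | [] => cases ha
  | [x] =>
    simp only [List.mem_singleton] at ha hb
    rw [ha, hb]
  | x :: y :: t => simp at h

lemma isCycle_of {a : Fin 32} {p : GG.Walk a a}
    (h1 : p.edges.Nodup) (h2 : p.support.tail.Nodup) (h3 : p.length = 8) : p.IsCycle := by
  rw [SimpleGraph.Walk.isCycle_def]
  refine ⟨⟨h1⟩, ?_, h2⟩
  intro hn
  rw [hn] at h3
  simp at h3

lemma decomp1 : IsCycleDecomposition GG 8 DD1 := by
  constructor
  · rintro C ⟨i, rfl⟩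
    have hnd : (EL1 i).Nodup := ((menc1 i) ▸ (key1 i).1).of_map
    refine ⟨⟨GG, (W1 i).1, (W1 i).2,
      isCycle_of hnd (key1 i).2.1 (key1 i).2.2, (key1 i).2.2, rfl⟩,
      fun e he => (W1 i).2.edges_subset_edgeSet he⟩
  · intro e he
    induction e using Sym2.ind with
    | _ x y =>
      obtain ⟨i, hi⟩ := ncover1 x y ((SimpleGraph.mem_edgeSet GG).mp he)
      refine ⟨{e | e ∈ EL1 i}, ⟨⟨i, rfl⟩, (mem_iff (menc1 i) _).mpr hi⟩, ?_⟩
      rintro C ⟨⟨j, rfl⟩, hj⟩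
      rcases eq_or_ne j i with rfl | hne
      · rfl
      · exact absurd hi (ndisj1 j i hne _ ((mem_iff (menc1 j) _).mp hj))

lemma decomp2 : IsCycleDecomposition GG 8 DD2 := by
  constructor
  · rintro C ⟨i, rfl⟩
    have hnd : (EL2 i).Nodup := ((menc2 i) ▸ (key2 i).1).of_map
    refine ⟨⟨GG, (W2 i).1, (W2 i).2,
      isCycle_of hnd (key2 i).2.1 (key2 i).2.2, (key2 i).2.2, rfl⟩,
      fun e he => (W2 i).2.edges_subset_edgeSet he⟩
  · intro e he
    induction e using Sym2.ind with
    | _ x y =>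
      obtain ⟨i, hi⟩ := ncover2 x y ((SimpleGraph.mem_edgeSet GG).mp he)
      refine ⟨{e | e ∈ EL2 i}, ⟨⟨i, rfl⟩, (mem_iff (menc2 i) _).mpr hi⟩, ?_⟩
      rintro C ⟨⟨j, rfl⟩, hj⟩
      rcases eq_or_ne j i with rfl | hne
      · rfl
      · exact absurd hi (ndisj2 j i hne _ ((mem_iff (menc2 j) _).mp hj))

lemma orth : OrthogonalDecompositions DD1 DD2 := by
  rintro C1 ⟨i, rfl⟩ C2 ⟨j, rfl⟩ a ⟨ha1, ha2⟩ b ⟨hb1, hb2⟩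
  have ha1' : enc a ∈ NL1 i := (mem_iff (menc1 i) a).mp ha1
  have ha2' : enc a ∈ NL2 j := (mem_iff (menc2 j) a).mp ha2
  have hb1' : enc b ∈ NL1 i := (mem_iff (menc1 i) b).mp hb1
  have hb2' : enc b ∈ NL2 j := (mem_iff (menc2 j) b).mp hb2
  refine enc_inj (len_le_one (north i j)
    (List.mem_filter.mpr ⟨ha1', decide_eq_true ha2'⟩)
    (List.mem_filter.mpr ⟨hb1', decide_eq_true hb2'⟩))

/-- `K_{16,16}`: the complete bipartite graph on 32 vertices, the parts being the
blocks of 16 consecutive vertices (vertices adjacent iff in distinct parts). -/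
theorem orthogonal_eight_cycle_decompositions_K16_16 :
    ∃ D₁ D₂ : Set (Set (Sym2 (Fin 32))),
      IsCycleDecomposition (SimpleGraph.fromRel (fun x y : Fin 32 => (x : ℕ) / 16 ≠ (y : ℕ) / 16)) 8 D₁ ∧
      IsCycleDecomposition (SimpleGraph.fromRel (fun x y : Fin 32 => (x : ℕ) / 16 ≠ (y : ℕ) / 16)) 8 D₂ ∧
      OrthogonalDecompositions D₁ D₂ := by
  exact ⟨DD1, DD2, decomp1, decomp2, orth⟩
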